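/- For every graph G, the Seidel matrix S(G) = J - I - 2A(G) has largest eigenvalue at most 3 if and only if the adjacency matrix of the cone over G has smallest eigenvalue at least -2. -/

import Mathlib

open Matrix

/-- The Seidel matrix `S(G) = J - I - 2A(G)` of a graph `G`. -/
def seidel {V : Type*} [Fintype V] [DecidableEq V] (G : SimpleGraph V)
    [DecidableRel G.Adj] : Matrix V V ℝ :=
  Matrix.of (fun _ _ => (1 : ℝ)) - 1 - (2 : ℝ) • G.adjMatrix ℝ

/-- The adjacency matrix of the cone over a graph whose adjacency matrix is `M`;
the added cone vertex (adjacent to all other vertices) is `none`. -/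
def coneMatrix {n : ℕ} (M : Matrix (Fin n) (Fin n) ℝ) :
    Matrix (Option (Fin n)) (Option (Fin n)) ℝ :=
  Matrix.of fun i j =>
    match i, j with
    | some a, some b => M a b
    | some _, none => 1
    | none, some _ => 1
    | none, none => 0

lemma quad_key (n : ℕ) (G : SimpleGraph (Fin n)) [DecidableRel G.Adj] (x : Option (Fin n) → ℝ) :
    x ⬝ᵥ (coneMatrix (G.adjMatrix ℝ) + (2:ℝ) • 1) *ᵥ x
    = (1/2) * ((x ∘ some) ⬝ᵥ ((3:ℝ) • (1 : Matrix (Fin n) (Fin n) ℝ) - seidel G) *ᵥ (x ∘ some))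
      + (1/2) * ((∑ i, x (some i)) + 2 * x none)^2 := by
  simp only [dotProduct, mulVec, seidel, coneMatrix, Matrix.add_apply, Matrix.sub_apply,
    Matrix.smul_apply, Matrix.one_apply, Matrix.of_apply, Function.comp_apply,
    Fintype.sum_option, smul_eq_mul]
  simp only [sub_mul, add_mul, mul_ite, mul_one, mul_zero, ite_mul, zero_mul, one_mul,
    Finset.sum_sub_distrib, Finset.sum_add_distrib, Finset.sum_ite_eq, Finset.mem_univ,
    if_true, mul_sub, mul_add, Finset.mul_sum, Finset.sum_ite_eq', reduceCtorEq, if_false]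
  have e1 : ∀ i j : Fin n, (1/2:ℝ) * (x (some i) * (2 * G.adjMatrix ℝ i j * x (some j)))
      = x (some i) * (G.adjMatrix ℝ i j * x (some j)) := fun i j => by ring
  have e2 : ∀ i : Fin n, (1/2:ℝ) * (x (some i) * (3 * x (some i)))
      = (3/2:ℝ) * (x (some i) * x (some i)) := fun i => by ring
  have e5 : ∀ i : Fin n, x (some i) * (2 * x (some i)) = (2:ℝ) * (x (some i) * x (some i)) :=
    fun i => by ring
  have e4 : ∀ i : Fin n, x (some i) * x none = x none * x (some i) := fun i => by ring
  have hSS : (∑ i, x (some i)) ^ 2 = ∑ i, ∑ j, x (some i) * x (some j) := by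
    rw [sq, Finset.sum_mul_sum]
  rw [add_sq, hSS]
  simp only [Option.some.injEq, Finset.sum_ite_eq, Finset.mem_univ, if_true,
    Finset.sum_const_zero, e1, e2, e4, e5, ← Finset.mul_sum]
  ring

lemma herm1 (n : ℕ) (G : SimpleGraph (Fin n)) [DecidableRel G.Adj] :
    ((3 : ℝ) • (1 : Matrix (Fin n) (Fin n) ℝ) - seidel G).IsHermitian := by
  ext i j
  simp [Matrix.IsHermitian, seidel, Matrix.conjTranspose_apply, Matrix.one_apply,
    SimpleGraph.adjMatrix, G.adj_comm, eq_comm]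

lemma herm2 (n : ℕ) (G : SimpleGraph (Fin n)) [DecidableRel G.Adj] :
    (coneMatrix (G.adjMatrix ℝ) + (2:ℝ) • 1).IsHermitian := by
  ext i j
  cases i <;> cases j <;>
    simp [coneMatrix, Matrix.conjTranspose_apply, Matrix.one_apply,
      SimpleGraph.adjMatrix, G.adj_comm, eq_comm, Option.some.injEq]

theorem stmt0 (n : ℕ) (G : SimpleGraph (Fin n)) [DecidableRel G.Adj] :
    ((3 : ℝ) • (1 : Matrix (Fin n) (Fin n) ℝ) - seidel G).PosSemidef ↔
      (coneMatrix (G.adjMatrix ℝ) + (2 : ℝ) • 1).PosSemidef := by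
  constructor
  · intro h
    refine .of_dotProduct_mulVec_nonneg (herm2 n G) (fun x => ?_)
    have hx := h.dotProduct_mulVec_nonneg (x ∘ some)
    simp only [star_trivial] at hx ⊢
    rw [quad_key n G x]
    nlinarith [sq_nonneg ((∑ i, x (some i)) + 2 * x none)]
  · intro h
    refine .of_dotProduct_mulVec_nonneg (herm1 n G) (fun y => ?_)
    set x : Option (Fin n) → ℝ := fun o => Option.elim o (-(∑ i, y i)/2) y with hxdef
    have hx := h.dotProduct_mulVec_nonneg x
    simp only [star_trivial] at hx
    rw [quad_key n G x] at hx
    have hx1 : x ∘ some = y := rfl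
    have hx2 : x none = -(∑ i, y i)/2 := rfl
    have hx3 : (∑ i, x (some i)) + 2 * x none = 0 := by
      show (∑ i, y i) + 2 * ((-∑ i, y i)/2) = 0
      ring
    rw [hx1, hx3] at hx
    simp only [star_trivial] at hx ⊢
    nlinarith [hx]
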